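/- Let R be a commutative integral domain and let x, y be distinct ring automorphisms of R. Let R_x denote the (R,R)-bimodule whose underlying left R-module is R and whose right action is m · r = x(r)·m, and define R_y analogously. Then every homomorphism of (R,R)-bimodules from R_x to R_y is zero. -/
import Mathlib

/-- Let `R` be a commutative integral domain and `x, y` distinct ring automorphisms of `R`.
Let `R_x` denote the `(R,R)`-bimodule whose underlying left `R`-module is `R` and whose
right action is `m · r = x r * m`, and define `R_y` analogously.  A homomorphism of
`(R,R)`-bimodules `R_x → R_y` is an additive map `f : R → R` which is left `R`-linear
(`f (r * m) = r * f m`) and compatible with the right actions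
(`f (x r * m) = y r * f m`).  Every such homomorphism is zero. -/
theorem standard_bimodule_hom_eq_zero
    {R : Type*} [CommRing R] [IsDomain R]
    (x y : R ≃+* R) (hxy : x ≠ y)
    (f : R →+ R)
    (hleft : ∀ r m : R, f (r * m) = r * f m)
    (hright : ∀ r m : R, f (x r * m) = y r * f m) :
    f = 0 := by
  have hf1 : f 1 = 0 := by
    by_contra h
    apply hxy
    ext r
    have h1 : f (x r * 1) = y r * f 1 := hright r 1
    have h2 : f (x r * 1) = x r * f 1 := by
      rw [mul_one]; have := hleft (x r) 1; rwa [mul_one] at this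
    have : (x r - y r) * f 1 = 0 := by rw [sub_mul, ← h2, h1]; ring
    have := (mul_eq_zero.mp this).resolve_right h
    exact sub_eq_zero.mp this
  ext r
  have := hleft r 1
  simp [hf1, mul_one] at this
  simpa using this
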